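/- Let g ∈ S_{2m} be the product of two disjoint cycles of equal length m. Then the number of matchings on the 2m points that commute with g is exactly m + 1 if m is even, and exactly m if m is odd. -/

import Mathlib

/-- A matching on a set is a fixed-point-free involution. -/
def IsMatching {X : Type*} (τ : Equiv.Perm X) : Prop :=
  τ * τ = 1 ∧ ∀ x, τ x ≠ x

/-- The number of matchings commuting with a given permutation. -/
noncomputable def matchingCount {X : Type*} (g : Equiv.Perm X) : ℕ :=
  Nat.card {τ : Equiv.Perm X // IsMatching τ ∧ Commute g τ}

open Equiv Equiv.Perm

section PermCongr

variable {α β : Type*}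

lemma permCongr_mul (e : α ≃ β) (σ τ : Perm α) :
    e.permCongr (σ * τ) = e.permCongr σ * e.permCongr τ := by
  ext y
  simp [Equiv.permCongr_apply, Perm.mul_apply]

lemma permCongr_one (e : α ≃ β) : e.permCongr (1 : Perm α) = 1 := by
  ext y; simp

lemma isMatching_permCongr (e : α ≃ β) (τ : Perm α) :
    IsMatching (e.permCongr τ) ↔ IsMatching τ := by
  constructor
  · rintro ⟨h1, h2⟩
    refine ⟨?_, fun x hx => h2 (e x) (by simp [Equiv.permCongr_apply, hx])⟩
    have key : e.permCongr (τ * τ) = e.permCongr 1 := by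
      rw [_root_.permCongr_mul, permCongr_one]; exact h1
    exact e.permCongr.injective key
  · rintro ⟨h1, h2⟩
    exact ⟨by rw [← _root_.permCongr_mul, h1, permCongr_one],
      fun y hy => h2 (e.symm y)
        (by simpa [Equiv.permCongr_apply] using congrArg e.symm hy)⟩

lemma commute_permCongr (e : α ≃ β) (g τ : Perm α) :
    Commute (e.permCongr g) (e.permCongr τ) ↔ Commute g τ := by
  unfold Commute SemiconjBy
  rw [← _root_.permCongr_mul, ← _root_.permCongr_mul, e.permCongr.injective.eq_iff]

lemma matchingCount_permCongr (e : α ≃ β) (g : Perm α) :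
    matchingCount (e.permCongr g) = matchingCount g := by
  unfold matchingCount
  refine (Nat.card_congr (Equiv.subtypeEquiv e.permCongr fun τ => ?_)).symm
  rw [isMatching_permCongr, commute_permCongr]

lemma matchingCount_eq_of_isConj {α : Type*} {g g' : Perm α} (h : IsConj g g') :
    matchingCount g = matchingCount g' := by
  obtain ⟨σ, hσ⟩ := isConj_iff.1 h
  rw [← hσ, ← Equiv.permCongr_eq_mul, matchingCount_permCongr]

lemma cycleType_permCongr [Fintype α] [DecidableEq α] [Fintype β] [DecidableEq β]
    (e : α ≃ β) (g : Perm α) : (e.permCongr g).cycleType = g.cycleType := by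
  classical
  have hp : ∀ b : β, (fun _ : β => True) b := fun _ => trivial
  have key : e.permCongr g = g.extendDomain (e.trans (Equiv.subtypeUnivEquiv hp).symm) := by
    ext b
    rw [Equiv.Perm.extendDomain_apply_subtype _ _ (hp b)]
    simp [Equiv.subtypeUnivEquiv, Equiv.permCongr_apply]
  rw [key, Equiv.Perm.cycleType_extendDomain]

end PermCongr

section Canonical

variable (m : ℕ) [NeZero m]

/-- The block of points with first coordinate `i`. -/
def blockEquiv (i : Fin 2) : ZMod m ≃ {p : Fin 2 × ZMod m // p.1 = i} where
  toFun x := ⟨(i, x), rfl⟩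
  invFun p := p.1.2
  left_inv x := rfl
  right_inv p := by
    obtain ⟨⟨j, x⟩, h⟩ := p
    subst h
    rfl

/-- The canonical product of two disjoint `m`-cycles. -/
def gZ : Perm (Fin 2 × ZMod m) :=
  (Equiv.addRight (1 : ZMod m)).extendDomain (blockEquiv m 0) *
    (Equiv.addRight (1 : ZMod m)).extendDomain (blockEquiv m 1)

lemma extend_apply_same (i : Fin 2) (x : ZMod m) :
    (Equiv.addRight (1 : ZMod m)).extendDomain (blockEquiv m i) (i, x) = (i, x + 1) :=
  Equiv.Perm.extendDomain_apply_subtype _ (blockEquiv m i) (b := (i, x)) rfl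

lemma extend_apply_other (i j : Fin 2) (x : ZMod m) (hij : j ≠ i) :
    (Equiv.addRight (1 : ZMod m)).extendDomain (blockEquiv m i) (j, x) = (j, x) :=
  Equiv.Perm.extendDomain_apply_not_subtype _ (blockEquiv m i) hij

lemma gZ_apply (j : Fin 2) (x : ZMod m) : gZ m (j, x) = (j, x + 1) := by
  rcases (by decide : ∀ j : Fin 2, j = 0 ∨ j = 1) j with hj | hj <;> subst hj
  · rw [gZ, Perm.mul_apply, extend_apply_other m 1 0 x (by decide), extend_apply_same]
  · rw [gZ, Perm.mul_apply, extend_apply_same, extend_apply_other m 0 1 _ (by decide)]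

end Canonical

section Counting

variable (m : ℕ) [NeZero m]

lemma swap_involutive (a : ZMod m) :
    Function.Involutive (fun p : Fin 2 × ZMod m =>
      (p.1 + 1, p.2 + (if p.1 = 0 then a else -a))) := by
  rintro ⟨i, x⟩
  fin_cases i <;> simp

/-- The matching swapping the two blocks, with offset `a`. -/
def swapPerm (a : ZMod m) : Perm (Fin 2 × ZMod m) :=
  (swap_involutive m a).toPerm

lemma swapPerm_apply (a : ZMod m) (p : Fin 2 × ZMod m) :
    swapPerm m a p = (p.1 + 1, p.2 + (if p.1 = 0 then a else -a)) := rfl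

lemma fix_involutive (a₀ a₁ : ZMod m) (h₀ : a₀ + a₀ = 0) (h₁ : a₁ + a₁ = 0) :
    Function.Involutive (fun p : Fin 2 × ZMod m =>
      (p.1, p.2 + (if p.1 = 0 then a₀ else a₁))) := by
  rintro ⟨i, x⟩
  fin_cases i <;> simp [add_assoc, h₀, h₁]

/-- The matching preserving the two blocks, with offsets `a₀`, `a₁`. -/
def fixPerm (a₀ a₁ : ZMod m) (h₀ : a₀ + a₀ = 0) (h₁ : a₁ + a₁ = 0) :
    Perm (Fin 2 × ZMod m) :=
  (fix_involutive m a₀ a₁ h₀ h₁).toPerm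

lemma fixPerm_apply (a₀ a₁ : ZMod m) (h₀ : a₀ + a₀ = 0) (h₁ : a₁ + a₁ = 0)
    (p : Fin 2 × ZMod m) :
    fixPerm m a₀ a₁ h₀ h₁ p = (p.1, p.2 + (if p.1 = 0 then a₀ else a₁)) := rfl

lemma isMatching_swapPerm (a : ZMod m) : IsMatching (swapPerm m a) := by
  constructor
  · apply Equiv.ext
    intro p
    rw [Perm.mul_apply]
    exact (swap_involutive m a) p
  · rintro ⟨i, x⟩ h
    have h1 : i + 1 = i := congrArg Prod.fst h
    exact (by decide : ∀ j : Fin 2, j + 1 ≠ j) i h1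

lemma commute_swapPerm (a : ZMod m) : Commute (gZ m) (swapPerm m a) := by
  apply Equiv.ext
  rintro ⟨i, x⟩
  rw [Perm.mul_apply, Perm.mul_apply, gZ_apply, swapPerm_apply, swapPerm_apply, gZ_apply]
  exact Prod.ext rfl (by ring)

lemma isMatching_fixPerm (a₀ a₁ : ZMod m) (h₀ : a₀ + a₀ = 0) (h₁ : a₁ + a₁ = 0)
    (h₀' : a₀ ≠ 0) (h₁' : a₁ ≠ 0) : IsMatching (fixPerm m a₀ a₁ h₀ h₁) := by
  constructor
  · apply Equiv.ext
    intro p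
    rw [Perm.mul_apply]
    exact (fix_involutive m a₀ a₁ h₀ h₁) p
  · rintro ⟨i, x⟩ h
    have h2 : x + (if i = 0 then a₀ else a₁) = x := congrArg Prod.snd h
    have h3 : (if i = 0 then a₀ else a₁) = 0 := by
      have := congrArg (fun z => z - x) h2
      simpa [add_comm, add_sub_cancel_left] using this
    by_cases hi : i = 0
    · rw [if_pos hi] at h3; exact h₀' h3
    · rw [if_neg hi] at h3; exact h₁' h3

lemma commute_fixPerm (a₀ a₁ : ZMod m) (h₀ : a₀ + a₀ = 0) (h₁ : a₁ + a₁ = 0) :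
    Commute (gZ m) (fixPerm m a₀ a₁ h₀ h₁) := by
  apply Equiv.ext
  rintro ⟨i, x⟩
  rw [Perm.mul_apply, Perm.mul_apply, gZ_apply, fixPerm_apply, fixPerm_apply, gZ_apply]
  exact Prod.ext rfl (by ring)

/-- Parameter space for block-preserving matchings. -/
def Qm : Type := {a : ZMod m // a + a = 0 ∧ a ≠ 0}

/-- The classification map. -/
noncomputable def Φ (s : ZMod m ⊕ (Qm m × Qm m)) :
    {τ : Perm (Fin 2 × ZMod m) // IsMatching τ ∧ Commute (gZ m) τ} :=
  match s with
  | Sum.inl a => ⟨swapPerm m a, isMatching_swapPerm m a, commute_swapPerm m a⟩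
  | Sum.inr (a₀, a₁) =>
      ⟨fixPerm m a₀.1 a₁.1 a₀.2.1 a₁.2.1,
        isMatching_fixPerm m a₀.1 a₁.1 a₀.2.1 a₁.2.1 a₀.2.2 a₁.2.2,
        commute_fixPerm m a₀.1 a₁.1 a₀.2.1 a₁.2.1⟩

lemma commute_apply_cast {τ : Perm (Fin 2 × ZMod m)} (h : Commute (gZ m) τ)
    (i : Fin 2) (n : ℕ) :
    τ (i, (n : ZMod m)) = ((τ (i, 0)).1, (τ (i, 0)).2 + n) := by
  have hgt : ∀ p, τ (gZ m p) = gZ m (τ p) := by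
    intro p
    have := congrArg (fun σ : Perm (Fin 2 × ZMod m) => σ p) h
    simpa [Perm.mul_apply] using this.symm
  induction n with
  | zero => simp
  | succ n ih =>
      have hc : ((n + 1 : ℕ) : ZMod m) = (n : ZMod m) + 1 := by push_cast; ring
      rw [hc, show ((i : Fin 2), (n : ZMod m) + 1) = gZ m (i, (n : ZMod m)) from
        (gZ_apply m i _).symm, hgt, ih, gZ_apply]
      refine Prod.ext rfl ?_
      push_cast
      ring

lemma Φ_injective : Function.Injective (Φ m) := by
  rintro (a | ⟨a₀, a₁⟩) (b | ⟨b₀, b₁⟩) h <;>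
    have h00 := congrArg (fun τ : {τ : Perm (Fin 2 × ZMod m) //
      IsMatching τ ∧ Commute (gZ m) τ} => τ.1 (0, 0)) h <;>
    have h10 := congrArg (fun τ : {τ : Perm (Fin 2 × ZMod m) //
      IsMatching τ ∧ Commute (gZ m) τ} => τ.1 (1, 0)) h <;>
    simp only [Φ, swapPerm_apply, fixPerm_apply] at h00 h10
  · have h0 := congrArg Prod.snd h00
    simp at h0
    exact congrArg Sum.inl h0
  · simpa using congrArg Prod.fst h00
  · simpa using congrArg Prod.fst h00
  · have h0 := congrArg Prod.snd h00
    have h1 := congrArg Prod.snd h10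
    simp at h0 h1
    exact congrArg Sum.inr (Prod.ext (Subtype.ext h0) (Subtype.ext h1))

lemma Φ_surjective : Function.Surjective (Φ m) := by
  rintro ⟨τ, ⟨hsq, hfp⟩, hcomm⟩
  have happ := commute_apply_cast m hcomm
  set b : Fin 2 → Fin 2 := fun i => (τ (i, 0)).1 with hb
  set c : Fin 2 → ZMod m := fun i => (τ (i, 0)).2 with hc
  have happ' : ∀ (i : Fin 2) (x : ZMod m), τ (i, x) = (b i, c i + x) := by
    intro i x
    obtain ⟨n, rfl⟩ := ZMod.natCast_zmod_surjective (n := m) x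
    exact happ i n
  have hττ : ∀ p, τ (τ p) = p := by
    intro p
    have := congrArg (fun σ : Perm (Fin 2 × ZMod m) => σ p) hsq
    simpa [Perm.mul_apply] using this
  have hbne : b 0 ≠ b 1 := by
    intro heq
    have h1 : τ (0, 0) = (b 0, c 0) := by rw [happ' 0 0, add_zero]
    have h2 : τ (1, c 0 - c 1) = (b 0, c 0) := by
      rw [happ' 1 (c 0 - c 1), ← heq]
      exact Prod.ext rfl (by ring)
    have := τ.injective (h1.trans h2.symm)
    simpa using congrArg Prod.fst this
  have hsq' : ∀ i : Fin 2, b (b i) = i ∧ c (b i) + c i = 0 := by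
    intro i
    have h := hττ (i, 0)
    rw [happ' i 0, add_zero, happ' (b i) (c i)] at h
    exact ⟨congrArg Prod.fst h, by simpa using congrArg Prod.snd h⟩
  by_cases hb0 : b 0 = 0
  · -- block-preserving case
    have hb1 : b 1 = 1 := by
      rcases (by decide : ∀ j : Fin 2, j = 0 ∨ j = 1) (b 1) with h | h
      · exact absurd (hb0.trans h.symm) hbne
      · exact h
    have hc0 : c 0 + c 0 = 0 := by have := (hsq' 0).2; rwa [hb0] at this
    have hc1 : c 1 + c 1 = 0 := by have := (hsq' 1).2; rwa [hb1] at this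
    have hc0' : c 0 ≠ 0 := by
      intro h0
      exact hfp (0, 0) (by rw [happ' 0 0, hb0, h0, add_zero])
    have hc1' : c 1 ≠ 0 := by
      intro h0
      exact hfp (1, 0) (by rw [happ' 1 0, hb1, h0, add_zero])
    refine ⟨Sum.inr (⟨c 0, hc0, hc0'⟩, ⟨c 1, hc1, hc1'⟩), Subtype.ext ?_⟩
    apply Equiv.ext
    rintro ⟨i, x⟩
    show fixPerm m (c 0) (c 1) hc0 hc1 (i, x) = τ (i, x)
    rw [fixPerm_apply, happ' i x]
    rcases (by decide : ∀ j : Fin 2, j = 0 ∨ j = 1) i with hi | hi <;> subst hi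
    · rw [if_pos rfl, hb0]
      exact Prod.ext rfl (by ring)
    · rw [if_neg (by decide : ¬ (1 : Fin 2) = 0), hb1]
      exact Prod.ext rfl (by ring)
  · -- block-swapping case
    have hb0' : b 0 = 1 := by
      rcases (by decide : ∀ j : Fin 2, j = 0 ∨ j = 1) (b 0) with h | h
      · exact absurd h hb0
      · exact h
    have hb1 : b 1 = 0 := by
      rcases (by decide : ∀ j : Fin 2, j = 0 ∨ j = 1) (b 1) with h | h
      · exact h
      · exact absurd (hb0'.trans h.symm) hbne
    have hc1 : c 1 = -(c 0) := by
      have h := (hsq' 0).2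
      rw [hb0'] at h
      linear_combination h
    refine ⟨Sum.inl (c 0), Subtype.ext ?_⟩
    apply Equiv.ext
    rintro ⟨i, x⟩
    show swapPerm m (c 0) (i, x) = τ (i, x)
    rw [swapPerm_apply, happ' i x]
    rcases (by decide : ∀ j : Fin 2, j = 0 ∨ j = 1) i with hi | hi <;> subst hi
    · rw [if_pos rfl, hb0']
      exact Prod.ext rfl (by ring)
    · rw [if_neg (by decide : ¬ (1 : Fin 2) = 0), hb1, hc1]
      exact Prod.ext rfl (by ring)

lemma card_Qm_even (hm : Even m) (hm2 : 2 ≤ m) : Nat.card (Qm m) = 1 := by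
  obtain ⟨k, hk⟩ := hm
  have hmem : ((k : ZMod m) + (k : ZMod m) = 0 ∧ (k : ZMod m) ≠ 0) := by
    constructor
    · rw [← Nat.cast_add, ← hk, ZMod.natCast_self]
    · rw [Ne, ZMod.natCast_eq_zero_iff]
      intro hdvd
      have := Nat.le_of_dvd (by omega) hdvd
      omega
  have huniq : ∀ a : ZMod m, a + a = 0 ∧ a ≠ 0 → a = (k : ZMod m) := by
    rintro a ⟨ha, ha0⟩
    have hval : a = ((a.val : ℕ) : ZMod m) := (ZMod.natCast_rightInverse a).symm
    have hlt : a.val < m := ZMod.val_lt a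
    have hdvd : m ∣ a.val + a.val := by
      rw [← ZMod.natCast_eq_zero_iff, Nat.cast_add, ← hval, ha]
    have hne : a.val ≠ 0 := by
      intro h0
      exact ha0 (by rw [hval, h0, Nat.cast_zero])
    obtain ⟨t, ht⟩ := hdvd
    have ht2 : t < 2 := by
      by_contra hle
      push_neg at hle
      have : m * 2 ≤ m * t := Nat.mul_le_mul_left m hle
      omega
    have ht0 : t ≠ 0 := by
      rintro rfl
      rw [Nat.mul_zero] at ht
      omega
    have ht1 : t = 1 := by omega
    subst ht1
    have hak : a.val = k := by omega
    rw [hval, hak]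
  haveI : Unique (Qm m) := by
    refine ⟨⟨⟨(k : ZMod m), hmem⟩⟩, ?_⟩
    rintro ⟨a, ha⟩
    exact Subtype.ext (huniq a ha)
  exact Nat.card_unique

lemma card_Qm_odd (hm : Odd m) : Nat.card (Qm m) = 0 := by
  haveI : IsEmpty (Qm m) := by
    refine ⟨?_⟩
    rintro ⟨a, ha, ha0⟩
    apply ha0
    have hval : a = ((a.val : ℕ) : ZMod m) := (ZMod.natCast_rightInverse a).symm
    have hdvd : m ∣ 2 * a.val := by
      rw [← ZMod.natCast_eq_zero_iff, Nat.cast_mul, ← hval]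
      push_cast
      rw [two_mul, ha]
    have hcop : Nat.Coprime m 2 := by
      rw [Nat.coprime_comm, Nat.Prime.coprime_iff_not_dvd Nat.prime_two]
      intro h2
      rw [Nat.odd_iff] at hm
      omega
    have hma : m ∣ a.val := Nat.Coprime.dvd_of_dvd_mul_left hcop hdvd
    have hlt : a.val < m := ZMod.val_lt a
    have h0 : a.val = 0 := Nat.eq_zero_of_dvd_of_lt hma hlt
    rw [hval, h0, Nat.cast_zero]
  exact Nat.card_of_isEmpty

lemma matchingCount_gZ : matchingCount (gZ m) = if Even m then m + 1 else m := by
  classical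
  haveI : Finite (Qm m) := by unfold Qm; infer_instance
  have hcard : matchingCount (gZ m) = Nat.card (ZMod m ⊕ (Qm m × Qm m)) :=
    (Nat.card_eq_of_bijective (Φ m) ⟨Φ_injective m, Φ_surjective m⟩).symm
  rw [hcard, Nat.card_sum, Nat.card_prod, Nat.card_zmod]
  by_cases hm : Even m
  · have hm2 : 2 ≤ m := by
      obtain ⟨k, hk⟩ := hm
      have := NeZero.pos m
      omega
    rw [card_Qm_even m hm hm2, if_pos hm]
  · rw [card_Qm_odd m (Nat.not_even_iff_odd.1 hm), if_neg hm]
    omega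

end Counting

section CycleType

variable (m : ℕ) [NeZero m]

lemma one_ne_zero_zmod (hm2 : 2 ≤ m) : (1 : ZMod m) ≠ 0 := by
  have h : ((1 : ℕ) : ZMod m) ≠ 0 := by
    rw [Ne, ZMod.natCast_eq_zero_iff]
    intro h
    have := Nat.le_of_dvd one_pos h
    omega
  simpa using h

lemma isCycle_addRight (hm2 : 2 ≤ m) : IsCycle (Equiv.addRight (1 : ZMod m)) := by
  have hone := one_ne_zero_zmod m hm2
  have hpow : ∀ (n : ℕ) (x : ZMod m), ((Equiv.addRight (1 : ZMod m)) ^ n) x = x + n := by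
    intro n
    induction n with
    | zero => intro x; simp
    | succ n ih =>
        intro x
        rw [pow_succ, Perm.mul_apply, ih]
        show x + 1 + (n : ZMod m) = x + ((n + 1 : ℕ) : ZMod m)
        push_cast
        ring
  refine ⟨0, ?_, ?_⟩
  · show (0 : ZMod m) + 1 ≠ 0
    simpa using hone
  · intro y _
    obtain ⟨n, rfl⟩ := ZMod.natCast_zmod_surjective (n := m) y
    exact ⟨(n : ℤ), by rw [zpow_natCast, hpow]; simp⟩

lemma support_addRight (hm2 : 2 ≤ m) :
    (Equiv.addRight (1 : ZMod m)).support.card = m := by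
  have hone := one_ne_zero_zmod m hm2
  have huniv : (Equiv.addRight (1 : ZMod m)).support = Finset.univ := by
    ext x
    simp only [Equiv.Perm.mem_support, Finset.mem_univ, iff_true]
    show x + 1 ≠ x
    intro h
    exact hone (by linear_combination h)
  rw [huniv, Finset.card_univ, ZMod.card]

lemma disjoint_blocks :
    Equiv.Perm.Disjoint
      ((Equiv.addRight (1 : ZMod m)).extendDomain (blockEquiv m 0))
      ((Equiv.addRight (1 : ZMod m)).extendDomain (blockEquiv m 1)) := by
  rintro ⟨j, x⟩
  rcases (by decide : ∀ j : Fin 2, j = 0 ∨ j = 1) j with hj | hj <;> subst hj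
  · right
    exact extend_apply_other m 1 0 x (by decide)
  · left
    exact extend_apply_other m 0 1 x (by decide)

lemma cycleType_gZ (hm2 : 2 ≤ m) :
    (gZ m).cycleType = Multiset.replicate 2 m := by
  have hc : IsCycle (Equiv.addRight (1 : ZMod m)) := isCycle_addRight m hm2
  have h0 := (hc.extendDomain (blockEquiv m 0)).cycleType
  have h1 := (hc.extendDomain (blockEquiv m 1)).cycleType
  rw [gZ, (disjoint_blocks m).cycleType_mul, h0, h1,
    Equiv.Perm.card_support_extend_domain, Equiv.Perm.card_support_extend_domain,
    support_addRight m hm2]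
  rfl

end CycleType

/-- If `g ∈ S_{2m}` is the product of two disjoint cycles of equal
length `m`, then the number of matchings on the `2m` points commuting with `g` is
`m + 1` if `m` is even and `m` if `m` is odd. -/
theorem stmt7 (m : ℕ) (hm : 0 < m) (g : Equiv.Perm (Fin (2 * m)))
    (hg : g.partition.parts = Multiset.replicate 2 m) :
    matchingCount g = if Even m then m + 1 else m := by
  classical
  haveI : NeZero m := ⟨by omega⟩
  obtain ⟨e⟩ : Nonempty (Fin 2 × ZMod m ≃ Fin (2 * m)) := by
    refine ⟨Fintype.equivOfCardEq ?_⟩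
    simp [ZMod.card]
  have hconj : IsConj (e.permCongr (gZ m)) g := by
    apply Equiv.Perm.isConj_of_cycleType_eq
    rw [cycleType_permCongr]
    rcases Nat.lt_or_ge m 2 with h2 | h2
    · -- m = 1 : both are the identity
      have hm1 : m = 1 := by omega
      subst hm1
      have hgZ : gZ 1 = 1 := by
        apply Equiv.ext
        rintro ⟨i, x⟩
        rw [gZ_apply]
        show ((i, x + 1) : Fin 2 × ZMod 1) = (i, x)
        exact Prod.ext rfl (Subsingleton.elim _ _)
      have hgcycle : g.cycleType = 0 := by
        rw [← Equiv.Perm.filter_parts_partition_eq_cycleType, hg]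
        rw [Multiset.filter_eq_nil.2]
        intro a ha
        rw [Multiset.eq_of_mem_replicate ha]
        decide
      rw [hgZ, hgcycle, Equiv.Perm.cycleType_one]
    · rw [cycleType_gZ m h2]
      rw [← Equiv.Perm.filter_parts_partition_eq_cycleType, hg]
      rw [Multiset.filter_eq_self.2]
      intro a ha
      rw [Multiset.eq_of_mem_replicate ha]
      exact h2
  rw [← matchingCount_eq_of_isConj hconj, matchingCount_permCongr, matchingCount_gZ]
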